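/- arXiv:2001.03394 — 4 statements merged into one kernel-verified Lean document; each statement's English description precedes it below -/
import Mathlib

section
/- Let g, u_d ∈ ℓ²(ℤ^d∖{0};ℂ) and let φ : W° → ℝ be C², nonnegative, convex, and satisfy φ(s,α) → +∞ as (s,α) approaches any boundary point of W°. Then the reduced functional j(s,α) := (1/(2(2π)^d)) ‖S(s,α) − u_d‖² + φ(s,α) attains its minimum on W°: there exists (s̄,ᾱ) ∈ W° with j(s̄,ᾱ) ≤ j(s,α) for all (s,α) ∈ W°. -/
open scoped BigOperators
open Filter

noncomputable section

/-- Index set `ℤ^d \ {0}` of nonzero frequencies. -/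
abbrev K (d : ℕ) : Type := {k : Fin d → ℤ // k ≠ 0}

/-- Euclidean norm `|k|` of a frequency `k ∈ ℤ^d \ {0}`. -/
noncomputable def nrm {d : ℕ} (k : K d) : ℝ := Real.sqrt (∑ i : Fin d, ((k.1 i : ℝ)) ^ 2)

/-- Squared fractional Sobolev seminorm `|u|_s² = Σ_k |k|^{2s} |u_k|²`. -/
noncomputable def HnormSq {d : ℕ} (s : ℝ) (u : K d → ℂ) : ℝ :=
  ∑' k : K d, nrm k ^ (2 * s) * ‖u k‖ ^ 2

/-- `u ∈ ℓ²`, i.e. `‖u‖ = |u|_0 < ∞`. -/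
def MemL2 {d : ℕ} (u : K d → ℂ) : Prop := Summable fun k : K d => ‖u k‖ ^ 2

/-- `|u|_s < ∞`. -/
def MemHs {d : ℕ} (s : ℝ) (u : K d → ℂ) : Prop :=
  Summable fun k : K d => nrm k ^ (2 * s) * ‖u k‖ ^ 2

/-- existence of a minimizer of the reduced functional
`j(s,α) = (1/(2(2π)^d))‖S(s,α) − u_d‖² + φ(s,α)` on `W°`, where `φ` is C², nonnegative,
convex, and blows up at the boundary of `W°`. -/
theorem stmt_5 (d : ℕ) (hd : 1 ≤ d) (g : K d → ℂ) (hg : MemL2 g)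
    (ud : K d → ℂ) (hud : MemL2 ud)
    (s₀ s₁ α₀ α₁ : ℝ) (hs₀ : 0 < s₀) (hs : s₀ < s₁) (hα₀ : 0 < α₀) (hα : α₀ < α₁)
    (W : Set (ℝ × ℝ)) (hW : W = Set.Ioo s₀ s₁ ×ˢ Set.Ioo α₀ α₁)
    (φ : ℝ × ℝ → ℝ) (hφC2 : ContDiffOn ℝ 2 φ W) (hφ0 : ∀ p ∈ W, 0 ≤ φ p)
    (hφconv : ConvexOn ℝ W φ)
    (hφblow : ∀ p ∈ frontier W, Tendsto φ (nhdsWithin p W) atTop)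
    (j : ℝ × ℝ → ℝ)
    (hj : ∀ p ∈ W, j p = (1 / (2 * (2 * Real.pi) ^ d)) *
        (∑' k : K d, ‖(p.2 : ℂ) * g k / ((p.2 + nrm k ^ (2 * p.1) : ℝ) : ℂ) - ud k‖ ^ 2)
      + φ p) :
    ∃ p ∈ W, ∀ q ∈ W, j p ≤ j q := by
  subst hW
  set W : Set (ℝ × ℝ) := Set.Ioo s₀ s₁ ×ˢ Set.Ioo α₀ α₁ with hWdef
  have hWopen : IsOpen W := isOpen_Ioo.prod isOpen_Ioo
  -- norms of nonzero frequencies are ≥ 1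
  have hnrm1 : ∀ k : K d, (1 : ℝ) ≤ nrm k := by
    intro k
    obtain ⟨i, hi⟩ : ∃ i, k.1 i ≠ 0 := Function.ne_iff.mp k.2
    have h1 : (1 : ℝ) ≤ ((k.1 i : ℝ)) ^ 2 := by
      have h : (1 : ℤ) ≤ (k.1 i) ^ 2 := by
        rcases lt_or_gt_of_ne hi with h | h <;> nlinarith
      exact_mod_cast h
    have h2 : (1 : ℝ) ≤ ∑ i, ((k.1 i : ℝ)) ^ 2 :=
      h1.trans (Finset.single_le_sum (f := fun j => ((k.1 j : ℝ)) ^ 2)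
        (fun j _ => sq_nonneg _) (Finset.mem_univ i))
    calc (1 : ℝ) = Real.sqrt 1 := Real.sqrt_one.symm
    _ ≤ nrm k := Real.sqrt_le_sqrt h2
  have hnrm0 : ∀ k : K d, (0 : ℝ) < nrm k := fun k => lt_of_lt_of_le one_pos (hnrm1 k)
  set T : K d → ℝ × ℝ → ℝ := fun k p =>
    ‖(p.2 : ℂ) * g k / ((p.2 + nrm k ^ (2 * p.1) : ℝ) : ℂ) - ud k‖ ^ 2 with hTdef
  have hT0 : ∀ k p, 0 ≤ T k p := fun k p => sq_nonneg _
  -- denominator is positive on W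
  have hden_pos : ∀ p ∈ W, ∀ k : K d, (0 : ℝ) < p.2 + nrm k ^ (2 * p.1) := by
    intro p hp k
    have h2 : 0 < p.2 := lt_trans hα₀ hp.2.1
    have h3 : 0 ≤ nrm k ^ (2 * p.1) := Real.rpow_nonneg (hnrm0 k).le _
    linarith
  -- pointwise bound for the terms
  set bound : K d → ℝ := fun k => 2 * ‖g k‖ ^ 2 + 2 * ‖ud k‖ ^ 2 with hbdef
  have hbsum : Summable bound := (hg.mul_left 2).add (hud.mul_left 2)
  have hTle : ∀ p ∈ W, ∀ k : K d, T k p ≤ bound k := by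
    intro p hp k
    have hden := hden_pos p hp k
    set x := p.2 + nrm k ^ (2 * p.1) with hxdef
    have h2 : 0 < p.2 := lt_trans hα₀ hp.2.1
    have hle : p.2 ≤ x := by
      have h3 : 0 ≤ nrm k ^ (2 * p.1) := Real.rpow_nonneg (hnrm0 k).le _
      simp only [hxdef]; linarith
    have heq : (p.2 : ℂ) * g k / ((x : ℝ) : ℂ) = ((p.2 / x : ℝ) : ℂ) * g k := by
      push_cast; ring
    have hnorm : ‖(p.2 : ℂ) * g k / ((x : ℝ) : ℂ)‖ ≤ ‖g k‖ := by
      rw [heq, norm_mul, Complex.norm_real, Real.norm_eq_abs,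
        abs_of_nonneg (div_nonneg h2.le hden.le)]
      have hq : p.2 / x ≤ 1 := div_le_one_of_le₀ hle hden.le
      nlinarith [norm_nonneg (g k), div_nonneg h2.le hden.le]
    have htri : ‖(p.2 : ℂ) * g k / ((x : ℝ) : ℂ) - ud k‖ ≤
        ‖(p.2 : ℂ) * g k / ((x : ℝ) : ℂ)‖ + ‖ud k‖ := norm_sub_le _ _
    simp only [hTdef, hbdef, ← hxdef]
    have hA : ‖(p.2 : ℂ) * g k / ((x : ℝ) : ℂ) - ud k‖ ≤ ‖g k‖ + ‖ud k‖ := by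
      linarith
    have hsq : ‖(p.2 : ℂ) * g k / ((x : ℝ) : ℂ) - ud k‖ ^ 2 ≤ (‖g k‖ + ‖ud k‖) ^ 2 :=
      pow_le_pow_left₀ (norm_nonneg _) hA 2
    nlinarith [sq_nonneg (‖g k‖ - ‖ud k‖)]
  -- continuity of each term
  have hTcont : ∀ p₀ ∈ W, ∀ k : K d, ContinuousAt (T k) p₀ := by
    intro p₀ hp₀ k
    have hden : ContinuousAt (fun p : ℝ × ℝ => p.2 + nrm k ^ (2 * p.1)) p₀ :=
      continuousAt_snd.add (continuousAt_const.rpow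
        (continuousAt_const.mul continuousAt_fst) (Or.inl (hnrm0 k).ne'))
    have hden0 : (p₀.2 + nrm k ^ (2 * p₀.1) : ℝ) ≠ 0 := (hden_pos p₀ hp₀ k).ne'
    have hnum : ContinuousAt (fun p : ℝ × ℝ =>
        (p.2 : ℂ) * g k / ((p.2 + nrm k ^ (2 * p.1) : ℝ) : ℂ)) p₀ := by
      refine ContinuousAt.div ?_ (Complex.continuous_ofReal.continuousAt.comp hden) ?_
      · exact (Complex.continuous_ofReal.continuousAt.comp continuousAt_snd).mul
          continuousAt_const
      · exact_mod_cast hden0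
    exact ((hnum.sub continuousAt_const).norm).pow 2
  -- the data-fidelity term
  set F : ℝ × ℝ → ℝ := fun p => ∑' k : K d, T k p with hFdef
  have hFcont : ContinuousOn F W := by
    intro p₀ hp₀
    refine tendsto_tsum_of_dominated_convergence hbsum
      (fun k => ((hTcont p₀ hp₀ k).continuousWithinAt).tendsto) ?_
    filter_upwards [self_mem_nhdsWithin] with p hp k
    rw [Real.norm_eq_abs, abs_of_nonneg (hT0 k p)]
    exact hTle p hp k
  have hF0 : ∀ p, 0 ≤ F p := fun p => tsum_nonneg fun k => hT0 k p
  set c₀ : ℝ := 1 / (2 * (2 * Real.pi) ^ d) with hc₀def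
  have hc₀ : 0 ≤ c₀ := by positivity
  have hjW : ∀ p ∈ W, j p = c₀ * F p + φ p := hj
  have hjcont : ContinuousOn j W :=
    ContinuousOn.congr ((continuousOn_const.mul hFcont).add hφC2.continuousOn) hjW
  have hφlej : ∀ p ∈ W, φ p ≤ j p := by
    intro p hp
    have := mul_nonneg hc₀ (hF0 p)
    rw [hjW p hp]; linarith
  -- a base point
  set p₀ : ℝ × ℝ := ((s₀ + s₁) / 2, (α₀ + α₁) / 2) with hp₀def
  have hp₀W : p₀ ∈ W := by
    constructor <;> constructor <;> simp only [hp₀def] <;> linarith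
  set c : ℝ := j p₀ with hcdef
  set S : Set (ℝ × ℝ) := {p | p ∈ W ∧ j p ≤ c} with hSdef
  have hSseq : IsSeqClosed S := by
    intro x p hx hxp
    have hxW : ∀ n, x n ∈ W := fun n => (hx n).1
    have hxpW : Tendsto x atTop (nhdsWithin p W) :=
      tendsto_nhdsWithin_iff.mpr ⟨hxp, Filter.Eventually.of_forall hxW⟩
    have hpW : p ∈ W := by
      by_contra hpc
      have hpcl : p ∈ closure W := mem_closure_of_tendsto hxp (Filter.Eventually.of_forall hxW)
      have hpf : p ∈ frontier W := ⟨hpcl, by rwa [hWopen.interior_eq]⟩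
      have hblow := (hφblow p hpf).comp hxpW
      have h1 : ∀ n, φ (x n) ≤ c := fun n => le_trans (hφlej _ (hxW n)) (hx n).2
      obtain ⟨n, hn⟩ := (hblow.eventually (eventually_gt_atTop c)).exists
      exact absurd (h1 n) (not_le.mpr hn)
    refine ⟨hpW, ?_⟩
    have hlim := ((hjcont p hpW).tendsto).comp hxpW
    exact le_of_tendsto hlim (Filter.Eventually.of_forall fun n => (hx n).2)
  have hSsub : S ⊆ Set.Icc s₀ s₁ ×ˢ Set.Icc α₀ α₁ := by
    intro p hp
    exact ⟨Set.Ioo_subset_Icc_self hp.1.1, Set.Ioo_subset_Icc_self hp.1.2⟩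
  have hScompact : IsCompact S :=
    (isCompact_Icc.prod isCompact_Icc).of_isClosed_subset hSseq.isClosed hSsub
  obtain ⟨pm, hpmS, hpm⟩ := hScompact.exists_isMinOn ⟨p₀, hp₀W, le_refl c⟩
    (hjcont.mono fun p hp => hp.1)
  refine ⟨pm, hpmS.1, fun q hq => ?_⟩
  by_cases hqc : j q ≤ c
  · exact isMinOn_iff.mp hpm q ⟨hq, hqc⟩
  · exact le_trans hpmS.2 (not_le.mp hqc).le
end
end

section
/- Let (s,α) with s > 0 and α > 0, let g ∈ ℓ², and let g' be any sequence in ℓ². Define u := (α g_k/(α + |k|^{2s}))_k and u' := (α g'_k/(α + |k|^{2s}))_k. Then the stability estimate |u − u'|_s ≤ α |g − g'|_{−s} holds (in particular with g' = P_n g the truncation of g to modes in ℤ_n^d). -/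
open scoped BigOperators
open Filter

noncomputable section

lemma one_le_nrm {d : ℕ} (k : K d) : 1 ≤ nrm k := by
  have hk := k.2
  rw [Function.ne_iff] at hk
  obtain ⟨i, hi⟩ := hk
  have h1 : (1 : ℝ) ≤ ((k.1 i : ℝ)) ^ 2 := by
    have : (1 : ℤ) ≤ (k.1 i) ^ 2 := by
      have : k.1 i ≠ 0 := hi
      nlinarith [sq_nonneg (k.1 i), Int.one_le_abs (this), sq_abs (k.1 i)]
    exact_mod_cast this
  have hsum : (1 : ℝ) ≤ ∑ i : Fin d, ((k.1 i : ℝ)) ^ 2 := by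
    calc (1 : ℝ) ≤ ((k.1 i : ℝ)) ^ 2 := h1
    _ ≤ ∑ i : Fin d, ((k.1 i : ℝ)) ^ 2 :=
      Finset.single_le_sum (f := fun j => ((k.1 j : ℝ)) ^ 2) (fun j _ => sq_nonneg _)
        (Finset.mem_univ i)
  unfold nrm
  exact Real.one_le_sqrt.mpr hsum

lemma nrm_pos {d : ℕ} (k : K d) : 0 < nrm k := lt_of_lt_of_le one_pos (one_le_nrm k)

/-- stability estimate `|u − u'|_s ≤ α |g − g'|_{−s}` for the solutions
`u = (α g_k/(α+|k|^{2s}))_k` and `u' = (α g'_k/(α+|k|^{2s}))_k` associated with data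
`g` and `g'` (in particular `g' = P_n g`). -/
theorem stmt_9 (d : ℕ) (hd : 1 ≤ d) (s α : ℝ) (hs : 0 < s) (hα : 0 < α)
    (g g' : K d → ℂ) (hg : MemL2 g) (hg' : MemL2 g')
    (u u' : K d → ℂ)
    (hu : ∀ k : K d, u k = (α : ℂ) * g k / ((α + nrm k ^ (2 * s) : ℝ) : ℂ))
    (hu' : ∀ k : K d, u' k = (α : ℂ) * g' k / ((α + nrm k ^ (2 * s) : ℝ) : ℂ)) :
    Real.sqrt (HnormSq s (u - u')) ≤ α * Real.sqrt (HnormSq (-s) (g - g')) := by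
  have hApos : ∀ k : K d, (0 : ℝ) < α + nrm k ^ (2 * s) := fun k =>
    add_pos hα (Real.rpow_pos_of_pos (nrm_pos k) _)
  -- norm of the difference
  have hnorm : ∀ k : K d, ‖u k - u' k‖ = α * ‖g k - g' k‖ / (α + nrm k ^ (2 * s)) := by
    intro k
    rw [hu k, hu' k, div_sub_div_same, ← mul_sub, norm_div, norm_mul]
    have h1 : ‖((α : ℝ) : ℂ)‖ = α := by
      rw [Complex.norm_real, Real.norm_eq_abs, abs_of_pos hα]
    have h2 : ‖(((α + nrm k ^ (2 * s) : ℝ)) : ℂ)‖ = α + nrm k ^ (2 * s) := by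
      rw [Complex.norm_real, Real.norm_eq_abs, abs_of_pos (hApos k)]
    rw [h1, h2]
  -- pointwise key inequality
  have key : ∀ k : K d, nrm k ^ (2 * s) * ‖(u - u') k‖ ^ 2 ≤
      α ^ 2 * (nrm k ^ (2 * (-s)) * ‖(g - g') k‖ ^ 2) := by
    intro k
    simp only [Pi.sub_apply]
    set a := nrm k ^ (2 * s) with ha_def
    set b := nrm k ^ (2 * (-s)) with hb_def
    have ha : 0 < a := Real.rpow_pos_of_pos (nrm_pos k) _
    have hb : 0 < b := Real.rpow_pos_of_pos (nrm_pos k) _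
    have hab : a * b = 1 := by
      rw [ha_def, hb_def, ← Real.rpow_add (nrm_pos k)]
      ring_nf
      exact Real.rpow_zero _
    set N := ‖g k - g' k‖ with hN_def
    have hN : 0 ≤ N := norm_nonneg _
    rw [hnorm k]
    have hA : a ≤ α + a := le_add_of_nonneg_left hα.le
    rw [div_pow, mul_pow, ← mul_div_assoc]
    rw [div_le_iff₀ (by positivity), ← hN_def]
    have h2 : a * a ≤ (α + a) * (α + a) := mul_le_mul hA hA ha.le (hApos k).le
    have h3 : b * (a * a) = a := by rw [← mul_assoc, mul_comm b a, hab, one_mul]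
    have h4 : a ≤ b * ((α + a) ^ 2) := by nlinarith [mul_le_mul_of_nonneg_left h2 hb.le]
    nlinarith [mul_le_mul_of_nonneg_left h4 (by positivity : (0:ℝ) ≤ α ^ 2 * N ^ 2)]
  -- summability of difference in ℓ²
  have hdiff : Summable fun k : K d => ‖(g - g') k‖ ^ 2 := by
    apply Summable.of_nonneg_of_le (fun k => sq_nonneg _)
      (fun k => ?_) (((hg.add hg').mul_left 2))
    simp only [Pi.sub_apply]
    calc ‖g k - g' k‖ ^ 2 ≤ (‖g k‖ + ‖g' k‖) ^ 2 := by
          have := norm_sub_le (g k) (g' k)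
          nlinarith [norm_nonneg (g k - g' k), norm_nonneg (g k), norm_nonneg (g' k)]
    _ ≤ 2 * (‖g k‖ ^ 2 + ‖g' k‖ ^ 2) := by nlinarith [sq_nonneg (‖g k‖ - ‖g' k‖)]
  -- summability of RHS
  have hR : Summable fun k : K d => nrm k ^ (2 * (-s)) * ‖(g - g') k‖ ^ 2 := by
    apply Summable.of_nonneg_of_le
      (fun k => mul_nonneg (Real.rpow_nonneg (nrm_pos k).le _) (sq_nonneg _))
      (fun k => ?_) hdiff
    have h1 : nrm k ^ (2 * (-s)) ≤ 1 :=
      Real.rpow_le_one_of_one_le_of_nonpos (one_le_nrm k) (by nlinarith)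
    calc nrm k ^ (2 * (-s)) * ‖(g - g') k‖ ^ 2 ≤ 1 * ‖(g - g') k‖ ^ 2 :=
          mul_le_mul_of_nonneg_right h1 (by positivity)
    _ = ‖(g - g') k‖ ^ 2 := one_mul _
  have hR' : Summable fun k : K d => α ^ 2 * (nrm k ^ (2 * (-s)) * ‖(g - g') k‖ ^ 2) :=
    hR.mul_left _
  have hL : Summable fun k : K d => nrm k ^ (2 * s) * ‖(u - u') k‖ ^ 2 :=
    Summable.of_nonneg_of_le
      (fun k => mul_nonneg (Real.rpow_nonneg (nrm_pos k).le _) (sq_nonneg _)) key hR'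
  have hsum : HnormSq s (u - u') ≤ α ^ 2 * HnormSq (-s) (g - g') := by
    unfold HnormSq
    rw [← tsum_mul_left]
    exact Summable.tsum_le_tsum key hL hR'
  calc Real.sqrt (HnormSq s (u - u')) ≤ Real.sqrt (α ^ 2 * HnormSq (-s) (g - g')) :=
        Real.sqrt_le_sqrt hsum
  _ = α * Real.sqrt (HnormSq (-s) (g - g')) := by
      rw [Real.sqrt_mul (sq_nonneg α), Real.sqrt_sq hα.le]
end
end

section
/- Fix g ∈ ℓ², s₁ ≥ 0, s₂ ≤ 0, β > 0, and let (α_n) be an increasing positive sequence with α_n → ∞. For each n let (u_n, v_n) be the unique minimizer of the decomposition functional I_{α_n}(u,v) := ½|u|_{s₁}² + (α_n/2)‖u + v − g‖² + (β/2)|v|_{s₂}². Then the sequence (u_n, v_n) is bounded in ℓ² × ℓ², and there is a subsequence along which u_n converges weakly in ℓ² to u₀ and v_n converges weakly to g − u₀, where u₀ is the unique minimizer of Ĩ(u) := ½|u|_{s₁}² + (β/2)|u − g|_{s₂}² over sequences u ∈ ℓ² with |u|_{s₁} < ∞. -/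
open scoped BigOperators
open Filter

noncomputable section

lemma memL2_add {d : ℕ} {x y : K d → ℂ} (hx : MemL2 x) (hy : MemL2 y) :
    MemL2 (fun k => x k + y k) := by
  refine Summable.of_nonneg_of_le (fun k => by positivity) (fun k => ?_)
    ((hx.add hy).mul_left 2)
  show ‖x k + y k‖^2 ≤ 2 * (‖x k‖^2 + ‖y k‖^2)
  have h := norm_add_le (x k) (y k)
  nlinarith [norm_nonneg (x k + y k), sq_nonneg (‖x k‖ - ‖y k‖), norm_nonneg (x k), norm_nonneg (y k)]

lemma memL2_sub {d : ℕ} {x y : K d → ℂ} (hx : MemL2 x) (hy : MemL2 y) :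
    MemL2 (fun k => x k - y k) := by
  have : MemL2 (fun k => -(y k)) := by
    unfold MemL2 at *; simpa using hy
  simpa [sub_eq_add_neg] using memL2_add hx this

lemma memHs_of_nonpos {d : ℕ} {s : ℝ} (hs : s ≤ 0) {x : K d → ℂ} (hx : MemL2 x) :
    MemHs s x := by
  refine Summable.of_nonneg_of_le (fun k => ?_) (fun k => ?_) hx
  · have := nrm_pos k; positivity
  have h1 : nrm k ^ (2*s) ≤ 1 :=
    Real.rpow_le_one_of_one_le_of_nonpos (one_le_nrm k) (by linarith)
  have := sq_nonneg ‖x k‖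
  nlinarith

open Complex in
lemma idB (a c : ℝ) (ha : 0 < a) (hc : 0 < c) (G t : ℂ) :
    a * normSq t + c * normSq (t - G)
      = a * normSq ((↑(c/(a+c)) : ℂ) * G) + c * normSq ((↑(c/(a+c)) : ℂ) * G - G)
        + (a + c) * normSq (t - (↑(c/(a+c)) : ℂ) * G) := by
  have h : a + c ≠ 0 := by positivity
  simp only [Complex.normSq_apply, Complex.sub_re, Complex.sub_im, Complex.mul_re,
    Complex.mul_im, Complex.ofReal_re, Complex.ofReal_im]
  field_simp
  ring

open Complex in
lemma idA (a c α : ℝ) (ha : 0 < a) (hc : 0 < c) (hα : 0 < α) (G t r : ℂ) :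
    a * normSq t + α * normSq (t + r - G) + c * normSq r
      = a * normSq ((↑(α*c/(a*c+α*a+α*c)) : ℂ) * G)
        + α * normSq ((↑(α*c/(a*c+α*a+α*c)) : ℂ) * G + (↑(α*a/(a*c+α*a+α*c)) : ℂ) * G - G)
        + c * normSq ((↑(α*a/(a*c+α*a+α*c)) : ℂ) * G)
        + (a * normSq (t - (↑(α*c/(a*c+α*a+α*c)) : ℂ) * G)
          + α * normSq (t + r - ((↑(α*c/(a*c+α*a+α*c)) : ℂ) * G + (↑(α*a/(a*c+α*a+α*c)) : ℂ) * G))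
          + c * normSq (r - (↑(α*a/(a*c+α*a+α*c)) : ℂ) * G)) := by
  have h : a*c + α*a + α*c ≠ 0 := by positivity
  simp only [Complex.normSq_apply, Complex.sub_re, Complex.sub_im, Complex.add_re, Complex.add_im,
    Complex.mul_re, Complex.mul_im, Complex.ofReal_re, Complex.ofReal_im]
  field_simp
  ring

lemma hnormSq_update {d : ℕ} (s : ℝ) (U : K d → ℂ) (hU : MemHs s U) (k₀ : K d) (t : ℂ) :
    HnormSq s (Function.update U k₀ t)
      = HnormSq s U - nrm k₀ ^ (2*s) * ‖U k₀‖^2 + nrm k₀ ^ (2*s) * ‖t‖^2 := by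
  classical
  have hf' : (fun k => nrm k ^ (2*s) * ‖Function.update U k₀ t k‖^2)
      = Function.update (fun k => nrm k ^ (2*s) * ‖U k‖^2) k₀ (nrm k₀ ^ (2*s) * ‖t‖^2) := by
    funext k; by_cases h : k = k₀ <;> simp [Function.update_apply, h]
  unfold HnormSq MemHs at *
  rw [hf', Summable.tsum_eq_add_tsum_ite (hU.update _ _) k₀, Summable.tsum_eq_add_tsum_ite hU k₀]
  have h2 : (fun k => if k = k₀ then (0:ℝ) else
      Function.update (fun k => nrm k ^ (2*s) * ‖U k‖^2) k₀ (nrm k₀ ^ (2*s)*‖t‖^2) k)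
      = fun k => if k = k₀ then 0 else nrm k ^ (2*s) * ‖U k‖^2 := by
    funext k; by_cases h : k = k₀ <;> simp [Function.update_apply, h]
  rw [h2, Function.update_self]
  ring

lemma memL2_update {d : ℕ} {U : K d → ℂ} (hU : MemL2 U) (k₀ : K d) (t : ℂ) :
    MemL2 (Function.update U k₀ t) := by
  classical
  have hf' : (fun k => ‖Function.update U k₀ t k‖^2)
      = Function.update (fun k => ‖U k‖^2) k₀ (‖t‖^2) := by
    funext k; by_cases h : k = k₀ <;> simp [Function.update_apply, h]
  unfold MemL2 at *; rw [hf']; exact hU.update _ _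

lemma memHs_update {d : ℕ} {s : ℝ} {U : K d → ℂ} (hU : MemHs s U) (k₀ : K d) (t : ℂ) :
    MemHs s (Function.update U k₀ t) := by
  classical
  have hf' : (fun k => nrm k ^ (2*s) * ‖Function.update U k₀ t k‖^2)
      = Function.update (fun k => nrm k ^ (2*s) * ‖U k‖^2) k₀ (nrm k₀ ^ (2*s) * ‖t‖^2) := by
    funext k; by_cases h : k = k₀ <;> simp [Function.update_apply, h]
  unfold MemHs at *; rw [hf']; exact hU.update _ _

lemma tsum_sq_update {d : ℕ} (U V g : K d → ℂ)
    (hs : Summable fun k => ‖U k + V k - g k‖^2) (k₀ : K d) (t r : ℂ) :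
    (∑' k, ‖Function.update U k₀ t k + Function.update V k₀ r k - g k‖^2)
      = (∑' k, ‖U k + V k - g k‖^2) - ‖U k₀ + V k₀ - g k₀‖^2 + ‖t + r - g k₀‖^2 := by
  classical
  have hf' : (fun k => ‖Function.update U k₀ t k + Function.update V k₀ r k - g k‖^2)
      = Function.update (fun k => ‖U k + V k - g k‖^2) k₀ (‖t + r - g k₀‖^2) := by
    funext k; by_cases h : k = k₀ <;> simp [Function.update_apply, h]
  rw [hf', Summable.tsum_eq_add_tsum_ite (hs.update _ _) k₀, Summable.tsum_eq_add_tsum_ite hs k₀]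
  have h2 : (fun k => if k = k₀ then (0:ℝ) else
      Function.update (fun k => ‖U k + V k - g k‖^2) k₀ (‖t + r - g k₀‖^2) k)
      = fun k => if k = k₀ then 0 else ‖U k + V k - g k‖^2 := by
    funext k; by_cases h : k = k₀ <;> simp [Function.update_apply, h]
  rw [h2, Function.update_self]
  ring

lemma norm_coef_mul_le {x : ℝ} (hx0 : 0 ≤ x) (hx1 : x ≤ 1) (z : ℂ) : ‖(↑x : ℂ) * z‖ ≤ ‖z‖ := by
  rw [norm_mul, Complex.norm_real, Real.norm_eq_abs, abs_of_nonneg hx0]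
  exact mul_le_of_le_one_left (norm_nonneg z) hx1

lemma norm_sq_eq_normSq (z : ℂ) : ‖z‖^2 = Complex.normSq z := by
  rw [Complex.sq_norm]

lemma solve_component (a c α : ℝ) (ha : 0 < a) (hc : 0 < c) (hα : 0 < α) (G t r : ℂ)
    (h : ∀ t' r' : ℂ, a * ‖t‖^2 + α * ‖t + r - G‖^2 + c * ‖r‖^2
        ≤ a * ‖t'‖^2 + α * ‖t' + r' - G‖^2 + c * ‖r'‖^2) :
    t = (↑(α*c/(a*c+α*a+α*c)) : ℂ) * G ∧ r = (↑(α*a/(a*c+α*a+α*c)) : ℂ) * G := by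
  have key := idA a c α ha hc hα G t r
  have h2 := h ((↑(α*c/(a*c+α*a+α*c)) : ℂ) * G) ((↑(α*a/(a*c+α*a+α*c)) : ℂ) * G)
  simp only [norm_sq_eq_normSq] at h2
  have hq1 : Complex.normSq (t - (↑(α*c/(a*c+α*a+α*c)) : ℂ) * G) = 0 := by
    nlinarith [Complex.normSq_nonneg (t - (↑(α*c/(a*c+α*a+α*c)) : ℂ) * G),
      Complex.normSq_nonneg (t + r - ((↑(α*c/(a*c+α*a+α*c)) : ℂ) * G + (↑(α*a/(a*c+α*a+α*c)) : ℂ) * G)),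
      Complex.normSq_nonneg (r - (↑(α*a/(a*c+α*a+α*c)) : ℂ) * G)]
  have hq2 : Complex.normSq (r - (↑(α*a/(a*c+α*a+α*c)) : ℂ) * G) = 0 := by
    nlinarith [Complex.normSq_nonneg (t - (↑(α*c/(a*c+α*a+α*c)) : ℂ) * G),
      Complex.normSq_nonneg (t + r - ((↑(α*c/(a*c+α*a+α*c)) : ℂ) * G + (↑(α*a/(a*c+α*a+α*c)) : ℂ) * G)),
      Complex.normSq_nonneg (r - (↑(α*a/(a*c+α*a+α*c)) : ℂ) * G)]
  constructor
  · have := Complex.normSq_eq_zero.mp hq1; linear_combination this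
  · have := Complex.normSq_eq_zero.mp hq2; linear_combination this

lemma component_min {d : ℕ} (s₁ s₂ α β : ℝ) (g U V : K d → ℂ)
    (hg : MemL2 g) (hU : MemL2 U) (hU1 : MemHs s₁ U) (hV : MemL2 V) (hs₂ : s₂ ≤ 0)
    (hmin : ∀ w z : K d → ℂ, MemL2 w → MemHs s₁ w → MemL2 z →
      (1/2) * HnormSq s₁ U + (α/2) * (∑' k, ‖U k + V k - g k‖^2) + (β/2) * HnormSq s₂ V
        ≤ (1/2) * HnormSq s₁ w + (α/2) * (∑' k, ‖w k + z k - g k‖^2) + (β/2) * HnormSq s₂ z)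
    (k₀ : K d) (t r : ℂ) :
    nrm k₀ ^ (2*s₁) * ‖U k₀‖^2 + α * ‖U k₀ + V k₀ - g k₀‖^2
        + β * nrm k₀ ^ (2*s₂) * ‖V k₀‖^2
      ≤ nrm k₀ ^ (2*s₁) * ‖t‖^2 + α * ‖t + r - g k₀‖^2 + β * nrm k₀ ^ (2*s₂) * ‖r‖^2 := by
  classical
  have hmid : Summable fun k => ‖U k + V k - g k‖^2 := memL2_sub (memL2_add hU hV) hg
  have hV2 : MemHs s₂ V := memHs_of_nonpos hs₂ hV
  have h := hmin (Function.update U k₀ t) (Function.update V k₀ r)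
    (memL2_update hU k₀ t) (memHs_update hU1 k₀ t) (memL2_update hV k₀ r)
  rw [hnormSq_update s₁ U hU1 k₀ t, hnormSq_update s₂ V hV2 k₀ r,
    tsum_sq_update U V g hmid k₀ t r] at h
  set M := ∑' (k : K d), ‖U k + V k - g k‖ ^ 2 with hM
  ring_nf at h ⊢
  linarith

open scoped Topology

/-- limiting behaviour as `α → ∞`. If `(u_n, v_n)` minimizes
`I_{α_n}(u,v) = ½|u|_{s₁}² + (α_n/2)‖u+v−g‖² + (β/2)|v|_{s₂}²` with `α_n ↑ ∞`, then
`(u_n, v_n)` is bounded in `ℓ² × ℓ²` and a subsequence converges weakly to `(u₀, g − u₀)`,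
where `u₀` is the unique minimizer of `Ĩ(u) = ½|u|_{s₁}² + (β/2)|u−g|_{s₂}²`. -/
theorem stmt_13 (d : ℕ) (hd : 1 ≤ d) (g : K d → ℂ) (hg : MemL2 g)
    (s₁ s₂ β : ℝ) (hs₁ : 0 ≤ s₁) (hs₂ : s₂ ≤ 0) (hβ : 0 < β)
    (αseq : ℕ → ℝ) (hαpos : ∀ n, 0 < αseq n) (hαmono : StrictMono αseq)
    (hαtop : Tendsto αseq atTop atTop)
    (u v : ℕ → K d → ℂ)
    (hmin : ∀ n : ℕ, MemL2 (u n) ∧ MemHs s₁ (u n) ∧ MemL2 (v n) ∧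
      ∀ w z : K d → ℂ, MemL2 w → MemHs s₁ w → MemL2 z →
        (1 / 2) * HnormSq s₁ (u n) +
            (αseq n / 2) * (∑' k : K d, ‖u n k + v n k - g k‖ ^ 2) +
            (β / 2) * HnormSq s₂ (v n)
          ≤ (1 / 2) * HnormSq s₁ w +
            (αseq n / 2) * (∑' k : K d, ‖w k + z k - g k‖ ^ 2) +
            (β / 2) * HnormSq s₂ z) :
    (∃ C : ℝ, ∀ n : ℕ,
      Real.sqrt (∑' k : K d, ‖u n k‖ ^ 2) ≤ C ∧
      Real.sqrt (∑' k : K d, ‖v n k‖ ^ 2) ≤ C) ∧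
    ∃ (u₀ : K d → ℂ) (ψ : ℕ → ℕ), StrictMono ψ ∧
      (∀ w : K d → ℂ, MemL2 w →
        Tendsto (fun n : ℕ => ∑' k : K d, starRingEnd ℂ (w k) * u (ψ n) k) atTop
          (nhds (∑' k : K d, starRingEnd ℂ (w k) * u₀ k))) ∧
      (∀ w : K d → ℂ, MemL2 w →
        Tendsto (fun n : ℕ => ∑' k : K d, starRingEnd ℂ (w k) * v (ψ n) k) atTop
          (nhds (∑' k : K d, starRingEnd ℂ (w k) * (g k - u₀ k)))) ∧
      MemL2 u₀ ∧ MemHs s₁ u₀ ∧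
      (∀ w : K d → ℂ, MemL2 w → MemHs s₁ w →
        (1 / 2) * HnormSq s₁ u₀ + (β / 2) * HnormSq s₂ (u₀ - g)
          ≤ (1 / 2) * HnormSq s₁ w + (β / 2) * HnormSq s₂ (w - g)) ∧
      (∀ w : K d → ℂ, MemL2 w → MemHs s₁ w →
        (∀ z : K d → ℂ, MemL2 z → MemHs s₁ z →
          (1 / 2) * HnormSq s₁ w + (β / 2) * HnormSq s₂ (w - g)
            ≤ (1 / 2) * HnormSq s₁ z + (β / 2) * HnormSq s₂ (z - g)) → w = u₀) := by
  classical
  have hApos : ∀ k : K d, 0 < nrm k ^ (2*s₁) := fun k => Real.rpow_pos_of_pos (nrm_pos k) _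
  have hcpos : ∀ k : K d, 0 < nrm k ^ (2*s₂) := fun k => Real.rpow_pos_of_pos (nrm_pos k) _
  have hcle1 : ∀ k : K d, nrm k ^ (2*s₂) ≤ 1 := fun k =>
    Real.rpow_le_one_of_one_le_of_nonpos (one_le_nrm k) (by linarith)
  have hACpos : ∀ k : K d, 0 < nrm k ^ (2*s₁) + β * nrm k ^ (2*s₂) :=
    fun k => add_pos (hApos k) (mul_pos hβ (hcpos k))
  have hDpos : ∀ (n : ℕ) (k : K d), 0 < nrm k ^ (2*s₁) * (β * nrm k ^ (2*s₂))
      + αseq n * nrm k ^ (2*s₁) + αseq n * (β * nrm k ^ (2*s₂)) := fun n k => by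
    have h1 := hApos k; have h2 := hcpos k; have h3 := hαpos n
    nlinarith [mul_pos h1 (mul_pos hβ h2), mul_pos h3 h1, mul_pos h3 (mul_pos hβ h2)]
  -- explicit formulas for the minimizers
  have hform : ∀ (n : ℕ) (k : K d),
      u n k = (↑(αseq n * (β * nrm k ^ (2*s₂)) /
        (nrm k ^ (2*s₁) * (β * nrm k ^ (2*s₂)) + αseq n * nrm k ^ (2*s₁)
          + αseq n * (β * nrm k ^ (2*s₂)))) : ℂ) * g k ∧
      v n k = (↑(αseq n * nrm k ^ (2*s₁) /
        (nrm k ^ (2*s₁) * (β * nrm k ^ (2*s₂)) + αseq n * nrm k ^ (2*s₁)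
          + αseq n * (β * nrm k ^ (2*s₂)))) : ℂ) * g k := by
    intro n k
    obtain ⟨h1, h2, h3, hm⟩ := hmin n
    have hc := component_min s₁ s₂ (αseq n) β g (u n) (v n) hg h1 h2 h3 hs₂ hm k
    exact solve_component (nrm k ^ (2*s₁)) (β * nrm k ^ (2*s₂)) (αseq n)
      (hApos k) (mul_pos hβ (hcpos k)) (hαpos n) (g k) (u n k) (v n k) hc
  -- the limit function
  obtain ⟨u₀, hu₀⟩ : ∃ u₀ : K d → ℂ, ∀ k : K d, u₀ k =
      (↑((β * nrm k ^ (2*s₂)) / (nrm k ^ (2*s₁) + β * nrm k ^ (2*s₂))) : ℂ) * g k :=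
    ⟨_, fun k => rfl⟩
  -- norm bounds
  have hbU : ∀ (n : ℕ) (k : K d), ‖u n k‖ ≤ ‖g k‖ := by
    intro n k
    rw [(hform n k).1]
    apply norm_coef_mul_le
    · exact div_nonneg (mul_nonneg (hαpos n).le (mul_nonneg hβ.le (hcpos k).le)) (hDpos n k).le
    · rw [div_le_one (hDpos n k)]
      nlinarith [mul_pos (hApos k) (mul_pos hβ (hcpos k)), mul_pos (hαpos n) (hApos k)]
  have hbV : ∀ (n : ℕ) (k : K d), ‖v n k‖ ≤ ‖g k‖ := by
    intro n k
    rw [(hform n k).2]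
    apply norm_coef_mul_le
    · exact div_nonneg (mul_nonneg (hαpos n).le (hApos k).le) (hDpos n k).le
    · rw [div_le_one (hDpos n k)]
      nlinarith [mul_pos (hApos k) (mul_pos hβ (hcpos k)), mul_pos (hαpos n) (mul_pos hβ (hcpos k))]
  have hbU0 : ∀ k : K d, ‖u₀ k‖ ≤ ‖g k‖ := by
    intro k
    rw [hu₀ k]
    apply norm_coef_mul_le
    · exact div_nonneg (mul_nonneg hβ.le (hcpos k).le) (hACpos k).le
    · rw [div_le_one (hACpos k)]; linarith [hApos k]
  -- pointwise convergence
  have hptU : ∀ k : K d, Tendsto (fun n => u n k) atTop (𝓝 (u₀ k)) := by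
    intro k
    have heq : (fun n => u n k) = fun n =>
        (↑(αseq n * (β * nrm k ^ (2*s₂)) /
          (nrm k ^ (2*s₁) * (β * nrm k ^ (2*s₂)) + αseq n * nrm k ^ (2*s₁)
            + αseq n * (β * nrm k ^ (2*s₂)))) : ℂ) * g k := funext fun n => (hform n k).1
    rw [heq, hu₀ k]
    refine Tendsto.mul_const (g k) ((Complex.continuous_ofReal.tendsto _).comp ?_)
    have he : ∀ n : ℕ, αseq n * (β * nrm k ^ (2*s₂)) /
        (nrm k ^ (2*s₁) * (β * nrm k ^ (2*s₂)) + αseq n * nrm k ^ (2*s₁)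
          + αseq n * (β * nrm k ^ (2*s₂)))
        = (β * nrm k ^ (2*s₂)) / (nrm k ^ (2*s₁) * (β * nrm k ^ (2*s₂)) / αseq n
          + (nrm k ^ (2*s₁) + β * nrm k ^ (2*s₂))) := by
      intro n
      have hp2 : 0 < nrm k ^ (2*s₁) * (β * nrm k ^ (2*s₂)) / αseq n
          + (nrm k ^ (2*s₁) + β * nrm k ^ (2*s₂)) :=
        add_pos (div_pos (mul_pos (hApos k) (mul_pos hβ (hcpos k))) (hαpos n)) (hACpos k)
      rw [div_eq_div_iff (ne_of_gt (hDpos n k)) (ne_of_gt hp2)]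
      field_simp [ne_of_gt (hαpos n)]
      ring
    simp only [he]
    refine Tendsto.div tendsto_const_nhds ?_ (ne_of_gt (hACpos k))
    have h0 : Tendsto (fun n => nrm k ^ (2*s₁) * (β * nrm k ^ (2*s₂)) / αseq n) atTop (𝓝 0) := by
      simpa [div_eq_mul_inv] using
        (hαtop.inv_tendsto_atTop).const_mul (nrm k ^ (2*s₁) * (β * nrm k ^ (2*s₂)))
    simpa using h0.add tendsto_const_nhds
  have hgu : ∀ k : K d, g k - u₀ k
      = (↑(nrm k ^ (2*s₁) / (nrm k ^ (2*s₁) + β * nrm k ^ (2*s₂))) : ℂ) * g k := by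
    intro k
    rw [hu₀ k]
    have h1 : nrm k ^ (2*s₁) / (nrm k ^ (2*s₁) + β * nrm k ^ (2*s₂))
        + (β * nrm k ^ (2*s₂)) / (nrm k ^ (2*s₁) + β * nrm k ^ (2*s₂)) = 1 := by
      rw [← add_div, div_self (ne_of_gt (hACpos k))]
    have h2 : (↑(nrm k ^ (2*s₁) / (nrm k ^ (2*s₁) + β * nrm k ^ (2*s₂))) : ℂ)
        + (↑((β * nrm k ^ (2*s₂)) / (nrm k ^ (2*s₁) + β * nrm k ^ (2*s₂))) : ℂ) = 1 := by
      rw [← Complex.ofReal_add, h1, Complex.ofReal_one]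
    linear_combination (-(g k)) * h2
  have hptV : ∀ k : K d, Tendsto (fun n => v n k) atTop (𝓝 (g k - u₀ k)) := by
    intro k
    have heq : (fun n => v n k) = fun n =>
        (↑(αseq n * nrm k ^ (2*s₁) /
          (nrm k ^ (2*s₁) * (β * nrm k ^ (2*s₂)) + αseq n * nrm k ^ (2*s₁)
            + αseq n * (β * nrm k ^ (2*s₂)))) : ℂ) * g k := funext fun n => (hform n k).2
    rw [heq, hgu k]
    refine Tendsto.mul_const (g k) ((Complex.continuous_ofReal.tendsto _).comp ?_)
    have he : ∀ n : ℕ, αseq n * nrm k ^ (2*s₁) /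
        (nrm k ^ (2*s₁) * (β * nrm k ^ (2*s₂)) + αseq n * nrm k ^ (2*s₁)
          + αseq n * (β * nrm k ^ (2*s₂)))
        = nrm k ^ (2*s₁) / (nrm k ^ (2*s₁) * (β * nrm k ^ (2*s₂)) / αseq n
          + (nrm k ^ (2*s₁) + β * nrm k ^ (2*s₂))) := by
      intro n
      have hp2 : 0 < nrm k ^ (2*s₁) * (β * nrm k ^ (2*s₂)) / αseq n
          + (nrm k ^ (2*s₁) + β * nrm k ^ (2*s₂)) :=
        add_pos (div_pos (mul_pos (hApos k) (mul_pos hβ (hcpos k))) (hαpos n)) (hACpos k)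
      rw [div_eq_div_iff (ne_of_gt (hDpos n k)) (ne_of_gt hp2)]
      field_simp [ne_of_gt (hαpos n)]
      ring
    simp only [he]
    refine Tendsto.div tendsto_const_nhds ?_ (ne_of_gt (hACpos k))
    have h0 : Tendsto (fun n => nrm k ^ (2*s₁) * (β * nrm k ^ (2*s₂)) / αseq n) atTop (𝓝 0) := by
      simpa [div_eq_mul_inv] using
        (hαtop.inv_tendsto_atTop).const_mul (nrm k ^ (2*s₁) * (β * nrm k ^ (2*s₂)))
    simpa using h0.add tendsto_const_nhds
  -- memberships of u₀
  have hL2u₀ : MemL2 u₀ :=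
    Summable.of_nonneg_of_le (fun k => sq_nonneg _)
      (fun k => pow_le_pow_left₀ (norm_nonneg _) (hbU0 k) 2) hg
  have hHsu₀ : MemHs s₁ u₀ := by
    refine Summable.of_nonneg_of_le (fun k => ?_) (fun k => ?_) (hg.mul_left β)
    · have := hApos k; positivity
    · have hnorm : ‖u₀ k‖ = (β * nrm k ^ (2*s₂) / (nrm k ^ (2*s₁) + β * nrm k ^ (2*s₂))) * ‖g k‖ := by
        rw [hu₀ k, norm_mul, Complex.norm_real, Real.norm_eq_abs,
          abs_of_nonneg (div_nonneg (mul_nonneg hβ.le (hcpos k).le) (hACpos k).le)]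
      have hkey : nrm k ^ (2*s₁) * (β * nrm k ^ (2*s₂) / (nrm k ^ (2*s₁) + β * nrm k ^ (2*s₂)))^2 ≤ β := by
        rw [div_pow, ← mul_div_assoc, div_le_iff₀ (pow_pos (hACpos k) 2)]
        nlinarith [hApos k, hcpos k, hcle1 k, hβ,
          mul_nonneg (mul_nonneg (hApos k).le (mul_pos hβ hβ).le)
            (mul_nonneg (hcpos k).le (sub_nonneg.mpr (hcle1 k))),
          mul_pos (mul_pos hβ (hApos k)) (hApos k),
          mul_pos (mul_pos (mul_pos hβ hβ) hβ) (mul_pos (hcpos k) (hcpos k))]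
      calc nrm k ^ (2*s₁) * ‖u₀ k‖^2
          = nrm k ^ (2*s₁) * (β * nrm k ^ (2*s₂) / (nrm k ^ (2*s₁) + β * nrm k ^ (2*s₂)))^2 * ‖g k‖^2 := by
            rw [hnorm]; ring
        _ ≤ β * ‖g k‖^2 := mul_le_mul_of_nonneg_right hkey (sq_nonneg _)
  -- splitting of the limit functional
  have hsplit : ∀ w : K d → ℂ, MemL2 w → MemHs s₁ w →
      (1/2) * HnormSq s₁ w + (β/2) * HnormSq s₂ (w - g)
        = ∑' k : K d, ((1/2) * (nrm k ^ (2*s₁) * ‖w k‖^2)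
            + (β/2) * (nrm k ^ (2*s₂) * ‖w k - g k‖^2)) := by
    intro w hw hw1
    have hs2 : Summable (fun k : K d => nrm k ^ (2*s₂) * ‖w k - g k‖^2) :=
      memHs_of_nonpos hs₂ (memL2_sub hw hg)
    unfold HnormSq
    rw [show (∑' k : K d, nrm k ^ (2*s₂) * ‖(w - g) k‖^2)
        = ∑' k : K d, nrm k ^ (2*s₂) * ‖w k - g k‖^2 from
      tsum_congr fun k => by simp [Pi.sub_apply]]
    rw [← tsum_mul_left, ← tsum_mul_left,
      ← Summable.tsum_add (hw1.mul_left (1/2)) (hs2.mul_left (β/2))]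
  have hkeyid : ∀ (k : K d) (z : ℂ),
      (1/2) * (nrm k ^ (2*s₁) * ‖z‖^2) + (β/2) * (nrm k ^ (2*s₂) * ‖z - g k‖^2)
        = ((1/2) * (nrm k ^ (2*s₁) * ‖u₀ k‖^2) + (β/2) * (nrm k ^ (2*s₂) * ‖u₀ k - g k‖^2))
          + ((nrm k ^ (2*s₁) + β * nrm k ^ (2*s₂))/2) * ‖z - u₀ k‖^2 := by
    intro k z
    have hid := idB (nrm k ^ (2*s₁)) (β * nrm k ^ (2*s₂)) (hApos k) (mul_pos hβ (hcpos k)) (g k) z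
    rw [hu₀ k]
    simp only [norm_sq_eq_normSq]
    linear_combination hid / 2
  have hQs : ∀ w : K d → ℂ, MemL2 w → MemHs s₁ w →
      Summable (fun k : K d => ((nrm k ^ (2*s₁) + β * nrm k ^ (2*s₂))/2) * ‖w k - u₀ k‖^2) := by
    intro w hw hw1
    have hFw : Summable (fun k : K d => (1/2) * (nrm k ^ (2*s₁) * ‖w k‖^2)
        + (β/2) * (nrm k ^ (2*s₂) * ‖w k - g k‖^2)) :=
      (hw1.mul_left (1/2)).add ((memHs_of_nonpos hs₂ (memL2_sub hw hg)).mul_left (β/2))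
    have hFu : Summable (fun k : K d => (1/2) * (nrm k ^ (2*s₁) * ‖u₀ k‖^2)
        + (β/2) * (nrm k ^ (2*s₂) * ‖u₀ k - g k‖^2)) :=
      (hHsu₀.mul_left (1/2)).add ((memHs_of_nonpos hs₂ (memL2_sub hL2u₀ hg)).mul_left (β/2))
    exact (hFw.sub hFu).congr (fun k => by linarith [hkeyid k (w k)])
  have hcmp : ∀ w : K d → ℂ, MemL2 w → MemHs s₁ w →
      (1/2) * HnormSq s₁ w + (β/2) * HnormSq s₂ (w - g)
        = ((1/2) * HnormSq s₁ u₀ + (β/2) * HnormSq s₂ (u₀ - g))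
          + ∑' k : K d, ((nrm k ^ (2*s₁) + β * nrm k ^ (2*s₂))/2) * ‖w k - u₀ k‖^2 := by
    intro w hw hw1
    have hFu : Summable (fun k : K d => (1/2) * (nrm k ^ (2*s₁) * ‖u₀ k‖^2)
        + (β/2) * (nrm k ^ (2*s₂) * ‖u₀ k - g k‖^2)) :=
      (hHsu₀.mul_left (1/2)).add ((memHs_of_nonpos hs₂ (memL2_sub hL2u₀ hg)).mul_left (β/2))
    rw [hsplit w hw hw1, hsplit u₀ hL2u₀ hHsu₀, ← Summable.tsum_add hFu (hQs w hw hw1)]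
    exact tsum_congr fun k => hkeyid k (w k)
  have hQnonneg : ∀ (w : K d → ℂ) (k : K d),
      0 ≤ ((nrm k ^ (2*s₁) + β * nrm k ^ (2*s₂))/2) * ‖w k - u₀ k‖^2 := by
    intro w k
    exact mul_nonneg (by linarith [hACpos k]) (sq_nonneg _)
  constructor
  · -- boundedness
    refine ⟨Real.sqrt (∑' k : K d, ‖g k‖^2), fun n => ?_⟩
    constructor
    · apply Real.sqrt_le_sqrt
      exact Summable.tsum_le_tsum (fun k => pow_le_pow_left₀ (norm_nonneg _) (hbU n k) 2)
        (Summable.of_nonneg_of_le (fun k => sq_nonneg _)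
          (fun k => pow_le_pow_left₀ (norm_nonneg _) (hbU n k) 2) hg) hg
    · apply Real.sqrt_le_sqrt
      exact Summable.tsum_le_tsum (fun k => pow_le_pow_left₀ (norm_nonneg _) (hbV n k) 2)
        (Summable.of_nonneg_of_le (fun k => sq_nonneg _)
          (fun k => pow_le_pow_left₀ (norm_nonneg _) (hbV n k) 2) hg) hg
  refine ⟨u₀, id, strictMono_id, ?_, ?_, ?_, ?_, ?_, ?_⟩
  · -- weak convergence of u
    intro w hw
    refine tendsto_tsum_of_dominated_convergence (bound := fun k => ‖w k‖ * ‖g k‖) ?_ ?_ ?_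
    · refine Summable.of_nonneg_of_le (fun k => mul_nonneg (norm_nonneg _) (norm_nonneg _))
        (fun k => ?_) ((hw.add hg).mul_left (1/2))
      nlinarith [sq_nonneg (‖w k‖ - ‖g k‖)]
    · exact fun k => tendsto_const_nhds.mul (hptU k)
    · refine Eventually.of_forall (fun n k => ?_)
      rw [norm_mul, RCLike.norm_conj]
      exact mul_le_mul_of_nonneg_left (hbU n k) (norm_nonneg _)
  · -- weak convergence of v
    intro w hw
    refine tendsto_tsum_of_dominated_convergence (bound := fun k => ‖w k‖ * ‖g k‖) ?_ ?_ ?_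
    · refine Summable.of_nonneg_of_le (fun k => mul_nonneg (norm_nonneg _) (norm_nonneg _))
        (fun k => ?_) ((hw.add hg).mul_left (1/2))
      nlinarith [sq_nonneg (‖w k‖ - ‖g k‖)]
    · exact fun k => tendsto_const_nhds.mul (hptV k)
    · refine Eventually.of_forall (fun n k => ?_)
      rw [norm_mul, RCLike.norm_conj]
      exact mul_le_mul_of_nonneg_left (hbV n k) (norm_nonneg _)
  · exact hL2u₀
  · exact hHsu₀
  · -- minimality
    intro w hw hw1
    have h := hcmp w hw hw1
    have hQn : 0 ≤ ∑' k : K d, ((nrm k ^ (2*s₁) + β * nrm k ^ (2*s₂))/2) * ‖w k - u₀ k‖^2 :=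
      tsum_nonneg (hQnonneg w)
    linarith
  · -- uniqueness
    intro w hw hw1 hmw
    have h1 := hmw u₀ hL2u₀ hHsu₀
    have h := hcmp w hw hw1
    have hsum0 : (∑' k : K d, ((nrm k ^ (2*s₁) + β * nrm k ^ (2*s₂))/2) * ‖w k - u₀ k‖^2) ≤ 0 := by
      linarith
    funext k
    have hQk0 : ((nrm k ^ (2*s₁) + β * nrm k ^ (2*s₂))/2) * ‖w k - u₀ k‖^2 = 0 := by
      have hle := Summable.le_tsum (hQs w hw hw1) k (fun j _ => hQnonneg w j)
      have hge := hQnonneg w k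
      linarith
    have hpos : 0 < (nrm k ^ (2*s₁) + β * nrm k ^ (2*s₂))/2 := by linarith [hACpos k]
    have hnz : ‖w k - u₀ k‖^2 = 0 := (mul_eq_zero.mp hQk0).resolve_left (ne_of_gt hpos)
    have : w k - u₀ k = 0 :=
      norm_eq_zero.mp ((pow_eq_zero_iff (two_ne_zero)).mp hnz)
    exact sub_eq_zero.mp this
end
end

section
/- Fix g ∈ ℓ², s₁ ≥ 0, s₂ ≤ 0, α > 0, and let (β_n) be an increasing positive sequence with β_n → ∞. For each n let (u_n, v_n) be the unique minimizer of the decomposition functional I_{β_n}(u,v) := ½|u|_{s₁}² + (α/2)‖u + v − g‖² + (β_n/2)|v|_{s₂}². Then the sequence (u_n, v_n) is bounded in ℓ² × ℓ², and there is a subsequence along which u_n converges weakly in ℓ² to u₀ and v_n converges weakly to 0, where u₀ is the unique minimizer of E(u) := ½|u|_{s₁}² + (α/2)‖u − g‖² over sequences u ∈ ℓ² with |u|_{s₁} < ∞. -/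
open scoped BigOperators
open Filter

noncomputable section

/- ### Auxiliary lemmas -/

lemma cnormsq (z : ℂ) : ‖z‖^2 = z.re^2 + z.im^2 := by
  rw [Complex.sq_norm, Complex.normSq_apply]; ring

lemma quad_ident (a al bb : ℝ) (hD : (a+al)*bb + al*a ≠ 0) (G x y : ℂ) :
    a/2*‖x‖^2 + al/2*‖x+y-G‖^2 + bb/2*‖y‖^2
    = a/2*‖((al*bb/((a+al)*bb+al*a) : ℝ):ℂ)*G‖^2
      + al/2*‖((al*bb/((a+al)*bb+al*a) : ℝ):ℂ)*G + ((al*a/((a+al)*bb+al*a) : ℝ):ℂ)*G - G‖^2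
      + bb/2*‖((al*a/((a+al)*bb+al*a) : ℝ):ℂ)*G‖^2
      + (a/2*‖x - ((al*bb/((a+al)*bb+al*a) : ℝ):ℂ)*G‖^2
        + al/2*‖(x - ((al*bb/((a+al)*bb+al*a) : ℝ):ℂ)*G) + (y - ((al*a/((a+al)*bb+al*a) : ℝ):ℂ)*G)‖^2
        + bb/2*‖y - ((al*a/((a+al)*bb+al*a) : ℝ):ℂ)*G‖^2) := by
  simp only [cnormsq, Complex.add_re, Complex.add_im, Complex.sub_re, Complex.sub_im,
    Complex.mul_re, Complex.mul_im, Complex.ofReal_re, Complex.ofReal_im]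
  generalize hDD : (a+al)*bb + al*a = D at *
  field_simp
  subst hDD
  ring

lemma quad_min (a al bb : ℝ) (ha : 0 < a) (hal : 0 < al) (hbb : 0 < bb)
    (G p q : ℂ)
    (h : ∀ x y : ℂ, a/2*‖p‖^2 + al/2*‖p+q-G‖^2 + bb/2*‖q‖^2
        ≤ a/2*‖x‖^2 + al/2*‖x+y-G‖^2 + bb/2*‖y‖^2) :
    p = ((al*bb/((a+al)*bb+al*a) : ℝ):ℂ)*G ∧ q = ((al*a/((a+al)*bb+al*a) : ℝ):ℂ)*G := by
  have hD : (0:ℝ) < (a+al)*bb + al*a := by positivity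
  set P : ℂ := ((al*bb/((a+al)*bb+al*a) : ℝ):ℂ)*G with hP
  set Q : ℂ := ((al*a/((a+al)*bb+al*a) : ℝ):ℂ)*G with hQ
  have hid := quad_ident a al bb hD.ne' G p q
  have hle := h P Q
  rw [hid] at hle
  have h1 : (0:ℝ) ≤ ‖p - P‖^2 := by positivity
  have h2 : (0:ℝ) ≤ ‖p - P + (q - Q)‖^2 := by positivity
  have h3 : (0:ℝ) ≤ ‖q - Q‖^2 := by positivity
  have hp : ‖p - P‖^2 = 0 := by nlinarith
  have hq : ‖q - Q‖^2 = 0 := by nlinarith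
  constructor
  · have := pow_eq_zero_iff (n := 2) (by norm_num) |>.mp hp
    exact sub_eq_zero.mp (norm_eq_zero.mp this)
  · have := pow_eq_zero_iff (n := 2) (by norm_num) |>.mp hq
    exact sub_eq_zero.mp (norm_eq_zero.mp this)

lemma quad_min' (a al be b : ℝ) (ha : 0 < a) (hal : 0 < al) (hbe : 0 < be) (hb : 0 < b)
    (G p q : ℂ)
    (h : ∀ x y : ℂ, (1/2)*(a*‖p‖^2) + (al/2)*‖p+q-G‖^2 + (be/2)*(b*‖q‖^2)
        ≤ (1/2)*(a*‖x‖^2) + (al/2)*‖x+y-G‖^2 + (be/2)*(b*‖y‖^2)) :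
    p = ((al*(be*b)/((a+al)*(be*b)+al*a) : ℝ):ℂ)*G
      ∧ q = ((al*a/((a+al)*(be*b)+al*a) : ℝ):ℂ)*G := by
  apply quad_min a al (be*b) ha hal (mul_pos hbe hb) G p q
  intro x y
  have := h x y
  linarith

lemma quadE_ident (a al : ℝ) (hD : a + al ≠ 0) (G x : ℂ) :
    (1/2)*(a*‖x‖^2) + al/2*‖x-G‖^2
    = (1/2)*(a*‖((al/(a+al) : ℝ):ℂ)*G‖^2) + al/2*‖((al/(a+al) : ℝ):ℂ)*G - G‖^2
      + (a+al)/2*‖x - ((al/(a+al) : ℝ):ℂ)*G‖^2 := by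
  simp only [cnormsq, Complex.add_re, Complex.add_im, Complex.sub_re, Complex.sub_im,
    Complex.mul_re, Complex.mul_im, Complex.ofReal_re, Complex.ofReal_im]
  field_simp
  ring

lemma tsum_update {d : ℕ} {F : K d → ℝ} (hF : Summable F) (k : K d) (c : ℝ) :
    ∑' j, Function.update F k c j = (∑' j, F j) - F k + c := by
  classical
  have h2 := Summable.tsum_eq_add_tsum_ite (hF.update k c) k
  have h3 : ∑' (n : K d), ite (n = k) 0 (Function.update F k c n)
      = ∑' (n : K d), ite (n = k) 0 (F n) := by
    apply tsum_congr; intro j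
    rcases eq_or_ne j k with rfl | hj
    · simp
    · simp [Function.update_of_ne hj, hj]
  rw [h3] at h2
  rw [h2, Function.update_self]
  linarith [Summable.tsum_eq_add_tsum_ite hF k]

lemma update_comp {d : ℕ} (A : K d → ℝ) (f : K d → ℂ) (k : K d) (x : ℂ) :
    (fun j => A j * ‖Function.update f k x j‖^2)
      = Function.update (fun j => A j * ‖f j‖^2) k (A k * ‖x‖^2) := by
  classical
  funext j
  rcases eq_or_ne j k with rfl | hj
  · simp
  · simp [Function.update_of_ne hj]

lemma update_mid {d : ℕ} (f h g : K d → ℂ) (k : K d) (x y : ℂ) :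
    (fun j => ‖Function.update f k x j + Function.update h k y j - g j‖^2)
      = Function.update (fun j => ‖f j + h j - g j‖^2) k (‖x + y - g k‖^2) := by
  classical
  funext j
  rcases eq_or_ne j k with rfl | hj
  · simp
  · simp [Function.update_of_ne hj]

lemma memL2_add_s14 {d : ℕ} {f h : K d → ℂ} (hf : MemL2 f) (hh : MemL2 h) :
    MemL2 (fun k => f k + h k) := by
  apply Summable.of_nonneg_of_le (fun k => sq_nonneg _) (fun k => ?_) ((hf.add hh).mul_left 2)
  show ‖f k + h k‖^2 ≤ 2*(‖f k‖^2 + ‖h k‖^2)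
  have h1 := norm_add_le (f k) (h k)
  nlinarith [mul_self_le_mul_self (norm_nonneg (f k + h k)) h1,
    sq_nonneg (‖f k‖ - ‖h k‖)]

lemma memL2_sub_s14 {d : ℕ} {f h : K d → ℂ} (hf : MemL2 f) (hh : MemL2 h) :
    MemL2 (fun k => f k - h k) := by
  apply Summable.of_nonneg_of_le (fun k => sq_nonneg _) (fun k => ?_) ((hf.add hh).mul_left 2)
  show ‖f k - h k‖^2 ≤ 2*(‖f k‖^2 + ‖h k‖^2)
  have h1 := norm_sub_le (f k) (h k)
  nlinarith [mul_self_le_mul_self (norm_nonneg (f k - h k)) h1,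
    sq_nonneg (‖f k‖ - ‖h k‖)]

lemma memL2_update_s14 {d : ℕ} {f : K d → ℂ} (hf : MemL2 f) (k : K d) (x : ℂ) :
    MemL2 (Function.update f k x) := by
  classical
  have h : (fun j => ‖Function.update f k x j‖^2)
      = Function.update (fun j => ‖f j‖^2) k (‖x‖^2) := by
    funext j
    rcases eq_or_ne j k with rfl | hj
    · simp
    · simp [Function.update_of_ne hj]
  unfold MemL2
  rw [h]
  exact hf.update k _

lemma memHs_update_s14 {d : ℕ} {s : ℝ} {f : K d → ℂ} (hf : MemHs s f) (k : K d) (x : ℂ) :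
    MemHs s (Function.update f k x) := by
  classical
  unfold MemHs
  rw [update_comp (fun j => nrm j ^ (2*s)) f k x]
  exact hf.update k _

lemma coef_u_tendsto (a b al : ℝ) (ha : 0 < a) (hb : 0 < b) (hal : 0 < al)
    {β : ℕ → ℝ} (hβ : Tendsto β atTop atTop) (hβpos : ∀ n, 0 < β n) :
    Tendsto (fun n => al*(β n*b)/((a+al)*(β n*b)+al*a)) atTop (nhds (al/(a+al))) := by
  have h0 : Tendsto (fun n => al*a/β n) atTop (nhds 0) :=
    Tendsto.div_atTop tendsto_const_nhds hβ
  have hden : Tendsto (fun n => (a+al)*b + al*a/β n) atTop (nhds ((a+al)*b)) := by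
    simpa using (tendsto_const_nhds (x := (a+al)*b)).add h0
  have hab : (0:ℝ) < (a+al)*b := mul_pos (by linarith) hb
  have hq : Tendsto (fun n => al*b/((a+al)*b + al*a/β n)) atTop
      (nhds (al*b/((a+al)*b))) :=
    tendsto_const_nhds.div hden hab.ne'
  have heq : ∀ n, al*b/((a+al)*b + al*a/β n) = al*(β n*b)/((a+al)*(β n*b)+al*a) := by
    intro n
    have h1 : (0:ℝ) < β n := hβpos n
    have h2 : (0:ℝ) < (a+al)*(β n*b)+al*a :=
      add_pos (mul_pos (by linarith) (mul_pos h1 hb)) (mul_pos hal ha)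
    have h3 : (0:ℝ) < (a+al)*b + al*a/β n :=
      add_pos hab (div_pos (mul_pos hal ha) h1)
    rw [div_eq_div_iff h3.ne' h2.ne']
    field_simp
  have hval : al*b/((a+al)*b) = al/(a+al) := by
    rw [div_eq_div_iff hab.ne' (by linarith : a+al ≠ 0)]
    ring
  rw [← hval]
  exact Tendsto.congr heq hq

lemma coef_v_tendsto (a b al : ℝ) (ha : 0 < a) (hb : 0 < b) (hal : 0 < al)
    {β : ℕ → ℝ} (hβ : Tendsto β atTop atTop) :
    Tendsto (fun n => al*a/((a+al)*(β n*b)+al*a)) atTop (nhds 0) := by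
  apply Tendsto.div_atTop tendsto_const_nhds
  have h1 : Tendsto (fun n => ((a+al)*b)*β n) atTop atTop :=
    Tendsto.const_mul_atTop (mul_pos (by linarith) hb) hβ
  have h2 : Tendsto (fun n => ((a+al)*b)*β n + al*a) atTop atTop :=
    tendsto_atTop_add_const_right _ _ h1
  apply h2.congr
  intro n
  ring

/-- limiting behaviour as `β → ∞`. If `(u_n, v_n)` minimizes
`I_{β_n}(u,v) = ½|u|_{s₁}² + (α/2)‖u+v−g‖² + (β_n/2)|v|_{s₂}²` with `β_n ↑ ∞`, then
`(u_n, v_n)` is bounded in `ℓ² × ℓ²` and a subsequence converges weakly to `(u₀, 0)`,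
where `u₀` is the unique minimizer of `E(u) = ½|u|_{s₁}² + (α/2)‖u−g‖²`. -/
theorem stmt_14 (d : ℕ) (hd : 1 ≤ d) (g : K d → ℂ) (hg : MemL2 g)
    (s₁ s₂ α : ℝ) (hs₁ : 0 ≤ s₁) (hs₂ : s₂ ≤ 0) (hα : 0 < α)
    (βseq : ℕ → ℝ) (hβpos : ∀ n, 0 < βseq n) (hβmono : StrictMono βseq)
    (hβtop : Tendsto βseq atTop atTop)
    (u v : ℕ → K d → ℂ)
    (hmin : ∀ n : ℕ, MemL2 (u n) ∧ MemHs s₁ (u n) ∧ MemL2 (v n) ∧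
      ∀ w z : K d → ℂ, MemL2 w → MemHs s₁ w → MemL2 z →
        (1 / 2) * HnormSq s₁ (u n) +
            (α / 2) * (∑' k : K d, ‖u n k + v n k - g k‖ ^ 2) +
            (βseq n / 2) * HnormSq s₂ (v n)
          ≤ (1 / 2) * HnormSq s₁ w +
            (α / 2) * (∑' k : K d, ‖w k + z k - g k‖ ^ 2) +
            (βseq n / 2) * HnormSq s₂ z) :
    (∃ C : ℝ, ∀ n : ℕ,
      Real.sqrt (∑' k : K d, ‖u n k‖ ^ 2) ≤ C ∧
      Real.sqrt (∑' k : K d, ‖v n k‖ ^ 2) ≤ C) ∧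
    ∃ (u₀ : K d → ℂ) (ψ : ℕ → ℕ), StrictMono ψ ∧
      (∀ w : K d → ℂ, MemL2 w →
        Tendsto (fun n : ℕ => ∑' k : K d, starRingEnd ℂ (w k) * u (ψ n) k) atTop
          (nhds (∑' k : K d, starRingEnd ℂ (w k) * u₀ k))) ∧
      (∀ w : K d → ℂ, MemL2 w →
        Tendsto (fun n : ℕ => ∑' k : K d, starRingEnd ℂ (w k) * v (ψ n) k) atTop
          (nhds 0)) ∧
      MemL2 u₀ ∧ MemHs s₁ u₀ ∧
      (∀ w : K d → ℂ, MemL2 w → MemHs s₁ w →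
        (1 / 2) * HnormSq s₁ u₀ + (α / 2) * (∑' k : K d, ‖u₀ k - g k‖ ^ 2)
          ≤ (1 / 2) * HnormSq s₁ w + (α / 2) * (∑' k : K d, ‖w k - g k‖ ^ 2)) ∧
      (∀ w : K d → ℂ, MemL2 w → MemHs s₁ w →
        (∀ z : K d → ℂ, MemL2 z → MemHs s₁ z →
          (1 / 2) * HnormSq s₁ w + (α / 2) * (∑' k : K d, ‖w k - g k‖ ^ 2)
            ≤ (1 / 2) * HnormSq s₁ z + (α / 2) * (∑' k : K d, ‖z k - g k‖ ^ 2)) → w = u₀) := by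
  classical
  have hApos : ∀ k : K d, 0 < nrm k ^ (2*s₁) :=
    fun k => Real.rpow_pos_of_pos (nrm_pos k) _
  have hBpos : ∀ k : K d, 0 < nrm k ^ (2*s₂) :=
    fun k => Real.rpow_pos_of_pos (nrm_pos k) _
  have hBle1 : ∀ k : K d, nrm k ^ (2*s₂) ≤ 1 :=
    fun k => Real.rpow_le_one_of_one_le_of_nonpos (one_le_nrm k) (by linarith)
  -- explicit formula for the minimizers
  have hform : ∀ (n : ℕ) (k : K d),
      u n k = ((α*(βseq n*nrm k ^ (2*s₂))/((nrm k ^ (2*s₁)+α)*(βseq n*nrm k ^ (2*s₂))+α*nrm k ^ (2*s₁)) : ℝ):ℂ)*g k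
      ∧ v n k = ((α*nrm k ^ (2*s₁)/((nrm k ^ (2*s₁)+α)*(βseq n*nrm k ^ (2*s₂))+α*nrm k ^ (2*s₁)) : ℝ):ℂ)*g k := by
    intro n k
    obtain ⟨hu2, hu1, hv2, hminn⟩ := hmin n
    have hmid : Summable (fun j => ‖u n j + v n j - g j‖^2) :=
      memL2_sub_s14 (memL2_add_s14 hu2 hv2) hg
    have hv2' : Summable (fun j => nrm j ^ (2*s₂) * ‖v n j‖^2) := by
      apply Summable.of_nonneg_of_le
        (fun j => mul_nonneg (le_of_lt (hBpos j)) (sq_nonneg _)) (fun j => ?_) hv2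
      exact mul_le_of_le_one_left (sq_nonneg _) (hBle1 j)
    apply quad_min' (nrm k ^ (2*s₁)) α (βseq n) (nrm k ^ (2*s₂)) (hApos k) hα (hβpos n)
      (hBpos k) (g k) (u n k) (v n k)
    intro x y
    have h' := hminn (Function.update (u n) k x) (Function.update (v n) k y)
      (memL2_update_s14 hu2 k x) (memHs_update_s14 hu1 k x) (memL2_update_s14 hv2 k y)
    simp only [HnormSq] at h'
    rw [show (fun j => nrm j ^ (2*s₁) * ‖Function.update (u n) k x j‖^2)
        = Function.update (fun j => nrm j ^ (2*s₁) * ‖u n j‖^2) k (nrm k ^ (2*s₁) * ‖x‖^2)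
        from update_comp _ _ _ _] at h'
    rw [show (fun j => nrm j ^ (2*s₂) * ‖Function.update (v n) k y j‖^2)
        = Function.update (fun j => nrm j ^ (2*s₂) * ‖v n j‖^2) k (nrm k ^ (2*s₂) * ‖y‖^2)
        from update_comp _ _ _ _] at h'
    rw [show (fun j => ‖Function.update (u n) k x j + Function.update (v n) k y j - g j‖^2)
        = Function.update (fun j => ‖u n j + v n j - g j‖^2) k (‖x + y - g k‖^2)
        from update_mid _ _ _ _ _ _] at h'
    rw [tsum_update hu1 k, tsum_update hv2' k, tsum_update hmid k] at h'
    linarith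
  -- the limit function
  set u₀ : K d → ℂ := fun k => ((α/(nrm k ^ (2*s₁)+α) : ℝ):ℂ)*g k with hu₀def
  -- coefficient bounds
  have hDpos : ∀ (n : ℕ) (k : K d),
      0 < (nrm k ^ (2*s₁)+α)*(βseq n*nrm k ^ (2*s₂))+α*nrm k ^ (2*s₁) := by
    intro n k
    exact add_pos (mul_pos (add_pos (hApos k) hα) (mul_pos (hβpos n) (hBpos k)))
      (mul_pos hα (hApos k))
  have hub : ∀ (n : ℕ) (k : K d), ‖u n k‖ ≤ ‖g k‖ := by
    intro n k
    rw [(hform n k).1, norm_mul, Complex.norm_real, Real.norm_eq_abs]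
    have hc0 : 0 ≤ α*(βseq n*nrm k ^ (2*s₂))/((nrm k ^ (2*s₁)+α)*(βseq n*nrm k ^ (2*s₂))+α*nrm k ^ (2*s₁)) :=
      le_of_lt (div_pos (mul_pos hα (mul_pos (hβpos n) (hBpos k))) (hDpos n k))
    have hc1 : α*(βseq n*nrm k ^ (2*s₂))/((nrm k ^ (2*s₁)+α)*(βseq n*nrm k ^ (2*s₂))+α*nrm k ^ (2*s₁)) ≤ 1 := by
      rw [div_le_one (hDpos n k)]
      have h1 : 0 < nrm k ^ (2*s₁)*(βseq n*nrm k ^ (2*s₂)) :=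
        mul_pos (hApos k) (mul_pos (hβpos n) (hBpos k))
      nlinarith [mul_pos hα (hApos k)]
    rw [abs_of_nonneg hc0]
    calc _ ≤ 1 * ‖g k‖ := by
          apply mul_le_mul_of_nonneg_right hc1 (norm_nonneg _)
      _ = ‖g k‖ := one_mul _
  have hvb : ∀ (n : ℕ) (k : K d), ‖v n k‖ ≤ ‖g k‖ := by
    intro n k
    rw [(hform n k).2, norm_mul, Complex.norm_real, Real.norm_eq_abs]
    have hc0 : 0 ≤ α*nrm k ^ (2*s₁)/((nrm k ^ (2*s₁)+α)*(βseq n*nrm k ^ (2*s₂))+α*nrm k ^ (2*s₁)) :=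
      le_of_lt (div_pos (mul_pos hα (hApos k)) (hDpos n k))
    have hc1 : α*nrm k ^ (2*s₁)/((nrm k ^ (2*s₁)+α)*(βseq n*nrm k ^ (2*s₂))+α*nrm k ^ (2*s₁)) ≤ 1 := by
      rw [div_le_one (hDpos n k)]
      have h1 : 0 < (nrm k ^ (2*s₁)+α)*(βseq n*nrm k ^ (2*s₂)) :=
        mul_pos (add_pos (hApos k) hα) (mul_pos (hβpos n) (hBpos k))
      nlinarith
    rw [abs_of_nonneg hc0]
    calc _ ≤ 1 * ‖g k‖ := by
          apply mul_le_mul_of_nonneg_right hc1 (norm_nonneg _)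
      _ = ‖g k‖ := one_mul _
  -- pointwise limits
  have hulim : ∀ k : K d, Tendsto (fun n => u n k) atTop (nhds (u₀ k)) := by
    intro k
    have hr := coef_u_tendsto (nrm k ^ (2*s₁)) (nrm k ^ (2*s₂)) α (hApos k) (hBpos k) hα
      hβtop hβpos
    have hc : Tendsto (fun n =>
        ((α*(βseq n*nrm k ^ (2*s₂))/((nrm k ^ (2*s₁)+α)*(βseq n*nrm k ^ (2*s₂))+α*nrm k ^ (2*s₁)) : ℝ):ℂ))
        atTop (nhds ((α/(nrm k ^ (2*s₁)+α) : ℝ):ℂ)) :=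
      (Complex.continuous_ofReal.tendsto _).comp hr
    exact Tendsto.congr (fun n => ((hform n k).1).symm) (hc.mul_const (g k))
  have hvlim : ∀ k : K d, Tendsto (fun n => v n k) atTop (nhds 0) := by
    intro k
    have hr := coef_v_tendsto (nrm k ^ (2*s₁)) (nrm k ^ (2*s₂)) α (hApos k) (hBpos k) hα hβtop
    have hc : Tendsto (fun n =>
        ((α*nrm k ^ (2*s₁)/((nrm k ^ (2*s₁)+α)*(βseq n*nrm k ^ (2*s₂))+α*nrm k ^ (2*s₁)) : ℝ):ℂ))
        atTop (nhds ((0:ℝ):ℂ)) :=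
      (Complex.continuous_ofReal.tendsto _).comp hr
    have := hc.mul_const (g k)
    rw [Complex.ofReal_zero, zero_mul] at this
    exact Tendsto.congr (fun n => ((hform n k).2).symm) this
  -- u₀ bounds and memberships
  have hu₀b : ∀ k : K d, ‖u₀ k‖ ≤ ‖g k‖ := by
    intro k
    rw [hu₀def]
    simp only []
    rw [norm_mul, Complex.norm_real, Real.norm_eq_abs]
    have hc0 : 0 ≤ α/(nrm k ^ (2*s₁)+α) :=
      le_of_lt (div_pos hα (add_pos (hApos k) hα))
    have hc1 : α/(nrm k ^ (2*s₁)+α) ≤ 1 := by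
      rw [div_le_one (add_pos (hApos k) hα)]
      have := hApos k; linarith
    rw [abs_of_nonneg hc0]
    calc _ ≤ 1 * ‖g k‖ := mul_le_mul_of_nonneg_right hc1 (norm_nonneg _)
      _ = ‖g k‖ := one_mul _
  have hu₀2 : MemL2 u₀ := by
    apply Summable.of_nonneg_of_le (fun k => sq_nonneg _) (fun k => ?_) hg
    exact pow_le_pow_left₀ (norm_nonneg _) (hu₀b k) 2
  have hu₀1 : MemHs s₁ u₀ := by
    apply Summable.of_nonneg_of_le
      (fun k => mul_nonneg (le_of_lt (hApos k)) (sq_nonneg _))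
      (fun k => ?_) (hg.mul_left α)
    have hgk := sq_nonneg ‖g k‖
    have hA := hApos k
    have hnorm : ‖u₀ k‖^2 = (α/(nrm k ^ (2*s₁)+α))^2 * ‖g k‖^2 := by
      rw [hu₀def]
      simp only []
      rw [norm_mul, Complex.norm_real, Real.norm_eq_abs, mul_pow, sq_abs]
    rw [hnorm]
    have hkey : nrm k ^ (2*s₁) * (α/(nrm k ^ (2*s₁)+α))^2 ≤ α := by
      rw [div_pow, mul_div_assoc']
      rw [div_le_iff₀ (pow_pos (add_pos hA hα) 2)]
      nlinarith [mul_pos (mul_pos hA hA) hα, mul_pos (mul_pos hA hα) hα,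
        mul_pos (mul_pos hα hα) hα]
    nlinarith [mul_le_mul_of_nonneg_right hkey hgk]
  -- global energy identity, with summability of the remainder
  have hglob : ∀ w : K d → ℂ, MemL2 w → MemHs s₁ w →
      Summable (fun k : K d => (nrm k ^ (2*s₁)+α)/2 * ‖w k - u₀ k‖^2) ∧
      (1/2) * HnormSq s₁ w + (α/2) * (∑' k : K d, ‖w k - g k‖^2)
      = (1/2) * HnormSq s₁ u₀ + (α/2) * (∑' k : K d, ‖u₀ k - g k‖^2)
        + ∑' k : K d, (nrm k ^ (2*s₁)+α)/2 * ‖w k - u₀ k‖^2 := by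
    intro w hw2 hw1
    have hS2w : Summable (fun k => ‖w k - g k‖^2) := memL2_sub_s14 hw2 hg
    have hS2u : Summable (fun k => ‖u₀ k - g k‖^2) := memL2_sub_s14 hu₀2 hg
    have hpt : ∀ k : K d,
        (nrm k ^ (2*s₁)+α)/2 * ‖w k - u₀ k‖^2
        = ((1/2)*(nrm k ^ (2*s₁)*‖w k‖^2) + (α/2)*‖w k - g k‖^2)
          - ((1/2)*(nrm k ^ (2*s₁)*‖u₀ k‖^2) + (α/2)*‖u₀ k - g k‖^2) := by
      intro k
      have hid := quadE_ident (nrm k ^ (2*s₁)) α (by have := hApos k; linarith) (g k) (w k)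
      simp only [hu₀def]
      linarith [hid]
    have hf1 : Summable (fun k : K d =>
        (1/2)*(nrm k ^ (2*s₁)*‖w k‖^2) + (α/2)*‖w k - g k‖^2) :=
      (Summable.mul_left (1/2) hw1).add (hS2w.mul_left (α/2))
    have hf2 : Summable (fun k : K d =>
        (1/2)*(nrm k ^ (2*s₁)*‖u₀ k‖^2) + (α/2)*‖u₀ k - g k‖^2) :=
      (Summable.mul_left (1/2) hu₀1).add (hS2u.mul_left (α/2))
    have hre : (fun k : K d => (nrm k ^ (2*s₁)+α)/2 * ‖w k - u₀ k‖^2)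
        = fun k => ((1/2)*(nrm k ^ (2*s₁)*‖w k‖^2) + (α/2)*‖w k - g k‖^2)
          - ((1/2)*(nrm k ^ (2*s₁)*‖u₀ k‖^2) + (α/2)*‖u₀ k - g k‖^2) := funext hpt
    have hrs : Summable (fun k : K d => (nrm k ^ (2*s₁)+α)/2 * ‖w k - u₀ k‖^2) := by
      rw [hre]; exact hf1.sub hf2
    refine ⟨hrs, ?_⟩
    have ht : ∑' k : K d, (nrm k ^ (2*s₁)+α)/2 * ‖w k - u₀ k‖^2
        = (∑' k : K d, ((1/2)*(nrm k ^ (2*s₁)*‖w k‖^2) + (α/2)*‖w k - g k‖^2))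
          - ∑' k : K d, ((1/2)*(nrm k ^ (2*s₁)*‖u₀ k‖^2) + (α/2)*‖u₀ k - g k‖^2) := by
      rw [hre]; exact Summable.tsum_sub hf1 hf2
    rw [ht, Summable.tsum_add (Summable.mul_left (1/2) hw1) (hS2w.mul_left (α/2)),
      Summable.tsum_add (Summable.mul_left (1/2) hu₀1) (hS2u.mul_left (α/2)),
      tsum_mul_left, tsum_mul_left, tsum_mul_left, tsum_mul_left]
    simp only [HnormSq]
    ring
  refine ⟨⟨Real.sqrt (∑' k : K d, ‖g k‖^2), ?_⟩, u₀, id, strictMono_id, ?_, ?_, hu₀2, hu₀1, ?_, ?_⟩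
  · -- boundedness
    intro n
    constructor
    · apply Real.sqrt_le_sqrt
      exact Summable.tsum_le_tsum (fun k => pow_le_pow_left₀ (norm_nonneg _) (hub n k) 2)
        (hmin n).1 hg
    · apply Real.sqrt_le_sqrt
      exact Summable.tsum_le_tsum (fun k => pow_le_pow_left₀ (norm_nonneg _) (hvb n k) 2)
        (hmin n).2.2.1 hg
  · -- weak convergence of u
    intro w hw
    have hbound : Summable (fun k : K d => ‖w k‖*‖g k‖) := by
      apply Summable.of_nonneg_of_le (fun k => by positivity) (fun k => ?_)
        ((hw.add hg).mul_left (1/2))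
      nlinarith [sq_nonneg (‖w k‖ - ‖g k‖)]
    apply tendsto_tsum_of_dominated_convergence hbound
    · intro k
      exact (hulim k).const_mul (starRingEnd ℂ (w k))
    · apply Filter.Eventually.of_forall
      intro n k
      rw [norm_mul]
      have hc : ‖starRingEnd ℂ (w k)‖ = ‖w k‖ := by
        rw [starRingEnd_apply, norm_star]
      rw [hc]
      exact mul_le_mul_of_nonneg_left (hub n k) (norm_nonneg _)
  · -- weak convergence of v
    intro w hw
    have hbound : Summable (fun k : K d => ‖w k‖*‖g k‖) := by
      apply Summable.of_nonneg_of_le (fun k => by positivity) (fun k => ?_)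
        ((hw.add hg).mul_left (1/2))
      nlinarith [sq_nonneg (‖w k‖ - ‖g k‖)]
    have h0 : Tendsto (fun n : ℕ => ∑' k : K d, starRingEnd ℂ (w k) * v n k) atTop
        (nhds (∑' _k : K d, (0:ℂ))) := by
      apply tendsto_tsum_of_dominated_convergence hbound
      · intro k
        simpa using (hvlim k).const_mul (starRingEnd ℂ (w k))
      · apply Filter.Eventually.of_forall
        intro n k
        rw [norm_mul]
        have hc : ‖starRingEnd ℂ (w k)‖ = ‖w k‖ := by
          rw [starRingEnd_apply, norm_star]
        rw [hc]
        exact mul_le_mul_of_nonneg_left (hvb n k) (norm_nonneg _)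
    simpa using h0
  · -- minimality of u₀
    intro w hw2 hw1
    obtain ⟨hrs, hid⟩ := hglob w hw2 hw1
    have h0 : 0 ≤ ∑' k : K d, (nrm k ^ (2*s₁)+α)/2 * ‖w k - u₀ k‖^2 :=
      tsum_nonneg (fun k => mul_nonneg (by have := hApos k; positivity) (sq_nonneg _))
    linarith [hid]
  · -- uniqueness
    intro w hw2 hw1 hwmin
    obtain ⟨hrs, hid⟩ := hglob w hw2 hw1
    have h1 := hwmin u₀ hu₀2 hu₀1
    have hnn : ∀ k : K d, 0 ≤ (nrm k ^ (2*s₁)+α)/2 * ‖w k - u₀ k‖^2 :=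
      fun k => mul_nonneg (by have := hApos k; positivity) (sq_nonneg _)
    have h0 : 0 ≤ ∑' k : K d, (nrm k ^ (2*s₁)+α)/2 * ‖w k - u₀ k‖^2 := tsum_nonneg hnn
    have ht0 : ∑' k : K d, (nrm k ^ (2*s₁)+α)/2 * ‖w k - u₀ k‖^2 = 0 :=
      le_antisymm (by linarith [hid]) h0
    funext k
    have hk : (nrm k ^ (2*s₁)+α)/2 * ‖w k - u₀ k‖^2 ≤ 0 :=
      ht0 ▸ Summable.le_tsum hrs k (fun j _ => hnn j)
    have hk0 : (nrm k ^ (2*s₁)+α)/2 * ‖w k - u₀ k‖^2 = 0 := le_antisymm hk (hnn k)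
    have hcpos : 0 < (nrm k ^ (2*s₁)+α)/2 := by have := hApos k; linarith
    rcases mul_eq_zero.mp hk0 with h | h
    · exact absurd h hcpos.ne'
    · have := pow_eq_zero_iff (n := 2) (by norm_num) |>.mp h
      exact sub_eq_zero.mp (norm_eq_zero.mp this)
end
end
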